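/- Let f : Ω → ℂ be a nonvanishing scalar C¹ function on an open set Ω ⊆ ℝ³. If w : Ω → ℍ(ℂ) is a purely vectorial C¹ solution of the equation Dw + w·(Df/f) = 0, then rot(w/f) = 0 and div(fw) = 0 on Ω. -/

import Mathlib

open Quaternion

noncomputable section

/-- Points of ℝ³. -/
abbrev P3 := EuclideanSpace ℝ (Fin 3)

/-- Partial derivative ∂ₖ of a complex-valued function on ℝ³. -/
def pd (k : Fin 3) (F : P3 → ℂ) : P3 → ℂ :=
  fun p => fderiv ℝ F p (EuclideanSpace.single k 1)

/-- The Laplacian Δ = ∂₁² + ∂₂² + ∂₃². -/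
def lap3 (F : P3 → ℂ) : P3 → ℂ := fun p => ∑ k : Fin 3, pd k (pd k F) p

/-- Embedding of a complex scalar as a quaternion. -/
def qC (z : ℂ) : ℍ[ℂ] := ⟨z, 0, 0, 0⟩

/-- The quaternionic imaginary units e₁, e₂, e₃. -/
def qe : Fin 3 → ℍ[ℂ] := ![⟨0,1,0,0⟩, ⟨0,0,1,0⟩, ⟨0,0,0,1⟩]

/-- The eₖ-components of a quaternion. -/
def qcomp : Fin 3 → ℍ[ℂ] → ℂ := ![QuaternionAlgebra.imI, QuaternionAlgebra.imJ, QuaternionAlgebra.imK]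

/-- Quaternionic conjugation C_H. -/
def CH (q : ℍ[ℂ]) : ℍ[ℂ] := ⟨q.re, -q.imI, -q.imJ, -q.imK⟩

/-- Componentwise partial derivative of a quaternion-valued function. -/
def pdq (k : Fin 3) (W : P3 → ℍ[ℂ]) : P3 → ℍ[ℂ] :=
  fun p => ⟨pd k (fun x => (W x).re) p, pd k (fun x => (W x).imI) p,
            pd k (fun x => (W x).imJ) p, pd k (fun x => (W x).imK) p⟩

/-- The Dirac (Moisil–Theodorescu) operator D Q = Σₖ eₖ ∂ₖ Q. -/
def Dq (W : P3 → ℍ[ℂ]) : P3 → ℍ[ℂ] := fun p => ∑ k : Fin 3, qe k * pdq k W p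

/-- The right Dirac operator Dᵣ Q = Σₖ (∂ₖ Q) eₖ. -/
def Drq (W : P3 → ℍ[ℂ]) : P3 → ℍ[ℂ] := fun p => ∑ k : Fin 3, pdq k W p * qe k

/-- Gradient of a scalar function viewed as a purely vectorial quaternion. -/
def gradq (F : P3 → ℂ) : P3 → ℍ[ℂ] := fun p => ⟨0, pd 0 F p, pd 1 F p, pd 2 F p⟩

/-- Divergence of (the vector part of) a quaternion-valued function. -/
def divq (W : P3 → ℍ[ℂ]) : P3 → ℂ :=
  fun p => pd 0 (fun x => (W x).imI) p + pd 1 (fun x => (W x).imJ) p + pd 2 (fun x => (W x).imK) p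

/-- Rotor (curl) of (the vector part of) a quaternion-valued function. -/
def rotq (W : P3 → ℍ[ℂ]) : P3 → ℍ[ℂ] :=
  fun p => ⟨0,
    pd 1 (fun x => (W x).imK) p - pd 2 (fun x => (W x).imJ) p,
    pd 2 (fun x => (W x).imI) p - pd 0 (fun x => (W x).imK) p,
    pd 0 (fun x => (W x).imJ) p - pd 1 (fun x => (W x).imI) p⟩

/-- Cross product of the vector parts of two quaternions. -/
def crossq (u v : ℍ[ℂ]) : ℍ[ℂ] :=
  ⟨0, u.imJ * v.imK - u.imK * v.imJ, u.imK * v.imI - u.imI * v.imK, u.imI * v.imJ - u.imJ * v.imI⟩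

/-- Bilinear scalar product of the vector parts of two quaternions. -/
def dotq (u v : ℍ[ℂ]) : ℂ := u.imI * v.imI + u.imJ * v.imJ + u.imK * v.imK

/-- `Cⁿ` smoothness of a quaternion-valued function on a set, componentwise. -/
def QContDiffOn (n : ℕ) (W : P3 → ℍ[ℂ]) (Ω : Set P3) : Prop :=
  ContDiffOn ℝ n (fun p => (W p).re) Ω ∧ ContDiffOn ℝ n (fun p => (W p).imI) Ω ∧
  ContDiffOn ℝ n (fun p => (W p).imJ) Ω ∧ ContDiffOn ℝ n (fun p => (W p).imK) Ω

/-- The pure-quaternion Df/f built from a nonvanishing scalar function f. -/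
def DfF (f : P3 → ℂ) : P3 → ℍ[ℂ] := fun p => (f p)⁻¹ • gradq f p

lemma pd_mul (k : Fin 3) (g h : P3 → ℂ) (p : P3)
    (hg : DifferentiableAt ℝ g p) (hh : DifferentiableAt ℝ h p) :
    pd k (fun x => g x * h x) p = g p * pd k h p + pd k g p * h p := by
  unfold pd
  rw [fderiv_fun_mul hg hh]
  simp [ContinuousLinearMap.add_apply, ContinuousLinearMap.smul_apply, smul_eq_mul]
  ring

lemma pd_inv (k : Fin 3) (g : P3 → ℂ) (p : P3)
    (hg : DifferentiableAt ℝ g p) (h0 : g p ≠ 0) :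
    pd k (fun x => (g x)⁻¹) p = -((g p)⁻¹ * pd k g p * (g p)⁻¹) := by
  unfold pd
  rw [show (fun x => (g x)⁻¹) = Inv.inv ∘ g from rfl,
    ((hasFDerivAt_inv' (𝕜 := ℝ) h0).comp p hg.hasFDerivAt).fderiv]
  simp

/-- if w is a purely vectorial solution of Dw + w·(Df/f) = 0,
    then rot(w/f) = 0 and div(fw) = 0. -/
theorem statement13 (Ω : Set P3) (hΩ : IsOpen Ω)
    (f : P3 → ℂ) (hf : ContDiffOn ℝ 1 f Ω) (hf0 : ∀ p ∈ Ω, f p ≠ 0)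
    (w : P3 → ℍ[ℂ]) (hw : QContDiffOn 1 w Ω) (hw0 : ∀ p ∈ Ω, (w p).re = 0)
    (heq : ∀ p ∈ Ω, Dq w p + w p * DfF f p = 0) :
    ∀ p ∈ Ω,
      (rotq (fun x => (f x)⁻¹ • w x) p = 0) ∧
      (divq (fun x => f x • w x) p = 0) := by
  intro p hp
  have hmem : Ω ∈ nhds p := hΩ.mem_nhds hp
  have hF0 : f p ≠ 0 := hf0 p hp
  have hdf : DifferentiableAt ℝ f p := (hf.contDiffAt hmem).differentiableAt one_ne_zero
  obtain ⟨hwre, hwI, hwJ, hwK⟩ := hw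
  have hdI : DifferentiableAt ℝ (fun x => (w x).imI) p :=
    (hwI.contDiffAt hmem).differentiableAt one_ne_zero
  have hdJ : DifferentiableAt ℝ (fun x => (w x).imJ) p :=
    (hwJ.contDiffAt hmem).differentiableAt one_ne_zero
  have hdK : DifferentiableAt ℝ (fun x => (w x).imK) p :=
    (hwK.contDiffAt hmem).differentiableAt one_ne_zero
  have hdFi : DifferentiableAt ℝ (fun x => (f x)⁻¹) p := hdf.inv hF0
  have hre : ∀ k : Fin 3, pd k (fun x => (w x).re) p = 0 := by
    intro k
    have h1 : (fun x => (w x).re) =ᶠ[nhds p] (fun _ => (0:ℂ)) := by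
      filter_upwards [hmem] with x hx using hw0 x hx
    unfold pd
    rw [h1.fderiv_eq]
    simp
  have hwre0 : (w p).re = 0 := hw0 p hp
  have E := heq p hp
  simp only [Dq, DfF, Fin.sum_univ_three, Matrix.cons_val_zero,
    Matrix.cons_val_one, Matrix.head_cons, Matrix.cons_val_two, Matrix.tail_cons,
    Quaternion.ext_iff, Quaternion.re_add, Quaternion.imI_add, Quaternion.imJ_add,
    Quaternion.imK_add, Quaternion.re_mul, Quaternion.imI_mul, Quaternion.imJ_mul,
    Quaternion.imK_mul, Quaternion.re_smul, Quaternion.imI_smul, Quaternion.imJ_smul,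
    Quaternion.imK_smul, Quaternion.re_zero, Quaternion.imI_zero, Quaternion.imJ_zero,
    Quaternion.imK_zero, smul_eq_mul, hre, hwre0] at E
  simp only [pdq, gradq, qe, Matrix.cons_val, hre, hwre0] at E
  obtain ⟨E0, E1, E2, E3⟩ := E
  have hsI : (fun x => ((f x)⁻¹ • w x).imI) = fun x => (f x)⁻¹ * (w x).imI := rfl
  have hsJ : (fun x => ((f x)⁻¹ • w x).imJ) = fun x => (f x)⁻¹ * (w x).imJ := rfl
  have hsK : (fun x => ((f x)⁻¹ • w x).imK) = fun x => (f x)⁻¹ * (w x).imK := rfl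
  have htI : (fun x => ((f x) • w x).imI) = fun x => f x * (w x).imI := rfl
  have htJ : (fun x => ((f x) • w x).imJ) = fun x => f x * (w x).imJ := rfl
  have htK : (fun x => ((f x) • w x).imK) = fun x => f x * (w x).imK := rfl
  constructor
  · rw [Quaternion.ext_iff]
    refine ⟨rfl, ?_, ?_, ?_⟩ <;>
    · show pd _ _ p - pd _ _ p = (0:ℂ)
      simp only [hsI, hsJ, hsK,
        pd_mul _ _ _ p hdFi hdI, pd_mul _ _ _ p hdFi hdJ, pd_mul _ _ _ p hdFi hdK,
        pd_inv _ f p hdf hF0]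
      field_simp at E1 E2 E3 ⊢
      try linear_combination f p * E1
      try linear_combination f p * E2
      try linear_combination f p * E3
      try linear_combination E1
      try linear_combination E2
      try linear_combination E3
  · show pd _ _ p + pd _ _ p + pd _ _ p = (0:ℂ)
    simp only [htI, htJ, htK,
      pd_mul _ _ _ p hdf hdI, pd_mul _ _ _ p hdf hdJ, pd_mul _ _ _ p hdf hdK]
    field_simp at E0
    refine mul_left_cancel₀ (pow_ne_zero 2 hF0) ?_
    linear_combination -f p ^ 2 * E0
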